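/- Let A and B be finite-dimensional k-algebras and M an A-B-bimodule for which there exists a surjection of left A-modules A^{⊕n} ↠ M for some natural number n. If X is a right A-module (not necessarily finite-dimensional) of finite endolength, then the right B-module X ⊗_A M has finite endolength, and its endolength is at most n times the endolength of X. -/

import Mathlib

set_option linter.unusedSectionVars false

open scoped TensorProduct
open MulOpposite

universe u

namespace JJ

noncomputable section

section BalTensor

variable (B : Type u) [Ring B] (M : Type u) [AddCommGroup M] [Module Bᵐᵒᵖ M]
  (N : Type u) [AddCommGroup N] [Module B N]

/-- The subgroup of relations defining the balanced tensor product `M ⊗_B N`. -/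
def balRel : Submodule ℤ (TensorProduct ℤ M N) :=
  Submodule.span ℤ { z | ∃ (b : B) (m : M) (n : N),
    z = (op b • m) ⊗ₜ[ℤ] n - m ⊗ₜ[ℤ] (b • n) }

/-- The balanced tensor product `M ⊗_B N` of a right `B`-module `M` and a left `B`-module `N`. -/
def BalTensor : Type u := TensorProduct ℤ M N ⧸ balRel B M N

instance : AddCommGroup (BalTensor B M N) :=
  inferInstanceAs (AddCommGroup (TensorProduct ℤ M N ⧸ balRel B M N))

/-- The canonical projection onto the balanced tensor product. -/
def BalTensor.mk : TensorProduct ℤ M N →+ BalTensor B M N :=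
  (balRel B M N).mkQ.toAddMonoidHom

/-- The image of a pure tensor in the balanced tensor product. -/
def BalTensor.tmul (m : M) (n : N) : BalTensor B M N := BalTensor.mk B M N (m ⊗ₜ n)

lemma BalTensor.mk_surjective : Function.Surjective (BalTensor.mk B M N) :=
  Submodule.mkQ_surjective _

lemma BalTensor.balance (b : B) (m : M) (n : N) :
    BalTensor.tmul B M N (op b • m) n = BalTensor.tmul B M N m (b • n) := by
  have h : ((op b • m) ⊗ₜ[ℤ] n - m ⊗ₜ[ℤ] (b • n)) ∈ balRel B M N :=
    Submodule.subset_span ⟨b, m, n, rfl⟩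
  have h2 := (Submodule.Quotient.mk_eq_zero (balRel B M N)).2 h
  rw [Submodule.Quotient.mk_sub] at h2
  exact sub_eq_zero.1 h2

end BalTensor

lemma tensorExtInt {M N : Type u} [AddCommGroup M] [AddCommGroup N]
    {f g : TensorProduct ℤ M N →ₗ[ℤ] TensorProduct ℤ M N}
    (h : ∀ m n, f (m ⊗ₜ n) = g (m ⊗ₜ n)) : f = g := by
  refine LinearMap.ext fun y => ?_
  induction y using TensorProduct.induction_on with
  | zero => rw [map_zero, map_zero]
  | tmul m n => exact h m n
  | add x y hx hy => rw [map_add, map_add, hx, hy]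

section LeftAction

variable (B : Type u) [Ring B] (M : Type u) [AddCommGroup M] [Module Bᵐᵒᵖ M]
  (N : Type u) [AddCommGroup N] [Module B N]
  (A : Type u) [Ring A] [Module A M] [SMulCommClass A Bᵐᵒᵖ M]

/-- The left action of `a : A` on the plain tensor product. -/
def lActAux (a : A) : TensorProduct ℤ M N →ₗ[ℤ] TensorProduct ℤ M N :=
  LinearMap.rTensor N (DistribMulAction.toAddMonoidHom M a).toIntLinearMap

lemma lActAux_tmul (a : A) (m : M) (n : N) :
    lActAux M N A a (m ⊗ₜ n) = (a • m) ⊗ₜ n := by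
  first
  | exact LinearMap.rTensor_tmul _ _ _ _
  | exact LinearMap.rTensor_tmul _ _ _
  | rfl

lemma lActAux_rel (a : A) :
    balRel B M N ≤ (balRel B M N).comap (lActAux M N A a) := by
  rw [balRel, Submodule.span_le]
  rintro z ⟨b, m, n, rfl⟩
  simp only [SetLike.mem_coe, Submodule.mem_comap, map_sub, lActAux_tmul]
  rw [smul_comm a (op b) m]
  exact Submodule.subset_span ⟨b, a • m, n, rfl⟩

/-- The left action of `A` on the balanced tensor product. -/
def lAct (a : A) : BalTensor B M N →ₗ[ℤ] BalTensor B M N :=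
  Submodule.mapQ _ _ (lActAux M N A a) (lActAux_rel B M N A a)

instance : SMul A (BalTensor B M N) := ⟨fun a x => lAct B M N A a x⟩

lemma BalTensor.lsmul_mk (a : A) (x : TensorProduct ℤ M N) :
    a • (BalTensor.mk B M N x) = BalTensor.mk B M N (lActAux M N A a x) := rfl

lemma BalTensor.lsmul_tmul (a : A) (m : M) (n : N) :
    a • (BalTensor.tmul B M N m n) = BalTensor.tmul B M N (a • m) n := by
  rw [BalTensor.tmul, BalTensor.lsmul_mk, lActAux_tmul]
  rfl

instance BalTensor.instLeftModule : Module A (BalTensor B M N) where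
  one_smul x := by
    obtain ⟨y, rfl⟩ := BalTensor.mk_surjective B M N x
    rw [BalTensor.lsmul_mk]
    congr 1
    have h : lActAux M N A (1 : A) = LinearMap.id :=
      tensorExtInt fun m n => by rw [lActAux_tmul, one_smul]; rfl
    rw [h]; rfl
  mul_smul a b x := by
    obtain ⟨y, rfl⟩ := BalTensor.mk_surjective B M N x
    rw [BalTensor.lsmul_mk, BalTensor.lsmul_mk, BalTensor.lsmul_mk]
    congr 1
    have h : lActAux M N A (a * b) = (lActAux M N A a).comp (lActAux M N A b) :=
      tensorExtInt fun m n => by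
        simp only [LinearMap.comp_apply, lActAux_tmul, mul_smul]
    rw [h]; rfl
  smul_zero a := map_zero (lAct B M N A a)
  smul_add a x y := map_add (lAct B M N A a) x y
  add_smul a b x := by
    obtain ⟨y, rfl⟩ := BalTensor.mk_surjective B M N x
    rw [BalTensor.lsmul_mk, BalTensor.lsmul_mk, BalTensor.lsmul_mk, ← map_add]
    congr 1
    have h : lActAux M N A (a + b) = lActAux M N A a + lActAux M N A b :=
      tensorExtInt fun m n => by
        simp only [LinearMap.add_apply, lActAux_tmul, add_smul, TensorProduct.add_tmul]
    rw [h]; rfl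
  zero_smul x := by
    obtain ⟨y, rfl⟩ := BalTensor.mk_surjective B M N x
    rw [BalTensor.lsmul_mk]
    have h : lActAux M N A (0 : A) = 0 :=
      tensorExtInt fun m n => by
        simp only [lActAux_tmul, zero_smul, TensorProduct.zero_tmul, LinearMap.zero_apply]
    rw [h]
    simp

end LeftAction

section RightAction

variable (B : Type u) [Ring B] (M : Type u) [AddCommGroup M] [Module Bᵐᵒᵖ M]
  (N : Type u) [AddCommGroup N] [Module B N]
  (C : Type u) [Ring C] [Module Cᵐᵒᵖ N] [SMulCommClass B Cᵐᵒᵖ N]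

/-- The right action of `c : Cᵐᵒᵖ` on the plain tensor product. -/
def rActAux (c : Cᵐᵒᵖ) : TensorProduct ℤ M N →ₗ[ℤ] TensorProduct ℤ M N :=
  LinearMap.lTensor M (DistribMulAction.toAddMonoidHom N c).toIntLinearMap

lemma rActAux_tmul (c : Cᵐᵒᵖ) (m : M) (n : N) :
    rActAux M N C c (m ⊗ₜ n) = m ⊗ₜ (c • n) := by
  first
  | exact LinearMap.lTensor_tmul _ _ _ _
  | exact LinearMap.lTensor_tmul _ _ _
  | rfl

lemma rActAux_rel (c : Cᵐᵒᵖ) :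
    balRel B M N ≤ (balRel B M N).comap (rActAux M N C c) := by
  rw [balRel, Submodule.span_le]
  rintro z ⟨b, m, n, rfl⟩
  simp only [SetLike.mem_coe, Submodule.mem_comap, map_sub, rActAux_tmul]
  rw [← smul_comm b c n]
  exact Submodule.subset_span ⟨b, m, c • n, rfl⟩

/-- The right action of `Cᵐᵒᵖ` on the balanced tensor product. -/
def rAct (c : Cᵐᵒᵖ) : BalTensor B M N →ₗ[ℤ] BalTensor B M N :=
  Submodule.mapQ _ _ (rActAux M N C c) (rActAux_rel B M N C c)

instance : SMul Cᵐᵒᵖ (BalTensor B M N) := ⟨fun c x => rAct B M N C c x⟩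

lemma BalTensor.rsmul_mk (c : Cᵐᵒᵖ) (x : TensorProduct ℤ M N) :
    c • (BalTensor.mk B M N x) = BalTensor.mk B M N (rActAux M N C c x) := rfl

lemma BalTensor.rsmul_tmul (c : Cᵐᵒᵖ) (m : M) (n : N) :
    c • (BalTensor.tmul B M N m n) = BalTensor.tmul B M N m (c • n) := by
  rw [BalTensor.tmul, BalTensor.rsmul_mk, rActAux_tmul]
  rfl

instance BalTensor.instRightModule : Module Cᵐᵒᵖ (BalTensor B M N) where
  one_smul x := by
    obtain ⟨y, rfl⟩ := BalTensor.mk_surjective B M N x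
    rw [BalTensor.rsmul_mk]
    congr 1
    have h : rActAux M N C (1 : Cᵐᵒᵖ) = LinearMap.id :=
      tensorExtInt fun m n => by rw [rActAux_tmul, one_smul]; rfl
    rw [h]; rfl
  mul_smul a b x := by
    obtain ⟨y, rfl⟩ := BalTensor.mk_surjective B M N x
    rw [BalTensor.rsmul_mk, BalTensor.rsmul_mk, BalTensor.rsmul_mk]
    congr 1
    have h : rActAux M N C (a * b) = (rActAux M N C a).comp (rActAux M N C b) :=
      tensorExtInt fun m n => by
        simp only [LinearMap.comp_apply, rActAux_tmul, mul_smul]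
    rw [h]; rfl
  smul_zero c := map_zero (rAct B M N C c)
  smul_add c x y := map_add (rAct B M N C c) x y
  add_smul a b x := by
    obtain ⟨y, rfl⟩ := BalTensor.mk_surjective B M N x
    rw [BalTensor.rsmul_mk, BalTensor.rsmul_mk, BalTensor.rsmul_mk, ← map_add]
    congr 1
    have h : rActAux M N C (a + b) = rActAux M N C a + rActAux M N C b :=
      tensorExtInt fun m n => by
        simp only [LinearMap.add_apply, rActAux_tmul, add_smul, TensorProduct.tmul_add]
    rw [h]; rfl
  zero_smul x := by
    obtain ⟨y, rfl⟩ := BalTensor.mk_surjective B M N x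
    rw [BalTensor.rsmul_mk]
    have h : rActAux M N C (0 : Cᵐᵒᵖ) = 0 :=
      tensorExtInt fun m n => by
        simp only [rActAux_tmul, zero_smul, TensorProduct.tmul_zero, LinearMap.zero_apply]
    rw [h]
    simp

end RightAction

section Comm

variable (B : Type u) [Ring B] (M : Type u) [AddCommGroup M] [Module Bᵐᵒᵖ M]
  (N : Type u) [AddCommGroup N] [Module B N]
  (A : Type u) [Ring A] [Module A M] [SMulCommClass A Bᵐᵒᵖ M]
  (C : Type u) [Ring C] [Module Cᵐᵒᵖ N] [SMulCommClass B Cᵐᵒᵖ N]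

instance BalTensor.instSMulCommClass : SMulCommClass A Cᵐᵒᵖ (BalTensor B M N) := by
  constructor
  intro a c x
  obtain ⟨y, rfl⟩ := BalTensor.mk_surjective B M N x
  rw [BalTensor.rsmul_mk, BalTensor.lsmul_mk, BalTensor.lsmul_mk, BalTensor.rsmul_mk]
  congr 1
  have h : (lActAux M N A a).comp (rActAux M N C c)
      = (rActAux M N C c).comp (lActAux M N A a) :=
    tensorExtInt fun m n => by
      simp only [LinearMap.comp_apply, lActAux_tmul, rActAux_tmul]
  exact DFunLike.congr_fun h y

end Comm

section BimodHom

variable (A : Type u) [Ring A] (C : Type u) [Ring C]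
variable (X : Type u) [AddCommGroup X] [Module A X] [Module Cᵐᵒᵖ X]
variable (Y : Type u) [AddCommGroup Y] [Module A Y] [Module Cᵐᵒᵖ Y]

/-- A map of `(A,C)`-bimodules: additive, left `A`-equivariant and right `C`-equivariant. -/
structure IsBimodHom (f : X → Y) : Prop where
  map_add : ∀ x y, f (x + y) = f x + f y
  map_lsmul : ∀ (a : A) (x : X), f (a • x) = a • f x
  map_rsmul : ∀ (c : Cᵐᵒᵖ) (x : X), f (c • x) = c • f x

/-- `X` is (isomorphic to) a direct summand of `Y` as an `(A,C)`-bimodule,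
i.e. a retract of `Y`. -/
def IsBimodSummand : Prop :=
  ∃ (i : X → Y) (p : Y → X), IsBimodHom A C X Y i ∧ IsBimodHom A C Y X p ∧ ∀ x, p (i x) = x

end BimodHom

section Jorder

variable (k : Type u) [Field k]

/-- A finite-dimensional `(A,B)`-bimodule over `k`, whose two induced `k`-actions agree
with the given one. -/
structure BimodData (A B : Type u) [Ring A] [Ring B] [Algebra k A] [Algebra k B] :
    Type (u + 1) where
  X : Type u
  [acg : AddCommGroup X]
  [modk : Module k X]
  [modl : Module A X]
  [modr : Module Bᵐᵒᵖ X]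
  [scc : SMulCommClass A Bᵐᵒᵖ X]
  [tl : IsScalarTower k A X]
  [tr : IsScalarTower k Bᵐᵒᵖ X]
  [fd : FiniteDimensional k X]

attribute [instance] BimodData.acg BimodData.modk BimodData.modl BimodData.modr BimodData.scc
  BimodData.tl BimodData.tr BimodData.fd

variable (A B : Type u) [Ring A] [Ring B] [Algebra k A] [Algebra k B]

/-- `A ≥_J B`: there are finite-dimensional bimodules `M`, `N` such that the regular
`A`-`A`-bimodule `A` is a direct summand of `M ⊗_B N`. -/
def Jge : Prop :=
  ∃ (M : BimodData k A B) (N : BimodData k B A),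
    IsBimodSummand A A A (BalTensor B M.X N.X)

/-- `A ≤_J B`. -/
def Jle : Prop := Jge k B A

/-- `A ∼_J B`: two-sided equivalence. -/
def Jequiv : Prop := Jge k A B ∧ Jge k B A

/-- `A >_J B`: strict two-sided inequality. -/
def Jgt : Prop := Jge k A B ∧ ¬ Jge k B A

end Jorder


section Endolength

/-- The length of a module, defined as the supremum of the lengths of chains of submodules
(the Krull dimension of the submodule lattice). -/
noncomputable def moduleLength (R X : Type u) [Ring R] [AddCommGroup X] [Module R X] :
    WithBot ℕ∞ :=
  Order.krullDim (Submodule R X)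

/-- The endolength of a module: its length as a module over its endomorphism ring. -/
noncomputable def endolength (R X : Type u) [Ring R] [AddCommGroup X] [Module R X] :
    WithBot ℕ∞ :=
  moduleLength (Module.End R X) X

end Endolength

section OrderAux

open Order

lemma prodChainAux {α β : Type*} [PartialOrder α] [PartialOrder β] :
    ∀ (L : ℕ) (f : Fin (L + 1) → α × β), StrictMono f →
      ∃ (qa : LTSeries α) (qb : LTSeries β),
        qa.last = (f (Fin.last L)).1 ∧ qb.last = (f (Fin.last L)).2 ∧
          L ≤ qa.length + qb.length := by
  intro L
  induction L with
  | zero =>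
    intro f _
    exact ⟨RelSeries.singleton _ (f (Fin.last 0)).1, RelSeries.singleton _ (f (Fin.last 0)).2,
      rfl, rfl, by simp⟩
  | succ L ih =>
    intro f hf
    obtain ⟨qa, qb, ha, hb, hlen⟩ := ih (fun i => f i.castSucc)
      (fun i j hij => hf (Fin.castSucc_lt_castSucc_iff.mpr hij))
    have hlt : f (Fin.last L).castSucc < f (Fin.last (L + 1)) := hf (Fin.castSucc_lt_last _)
    have hle := hlt.le
    rw [Prod.le_def] at hle
    by_cases h1 : (f (Fin.last L).castSucc).1 = (f (Fin.last (L + 1))).1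
    · have h2 : (f (Fin.last L).castSucc).2 < (f (Fin.last (L + 1))).2 :=
        lt_of_le_of_ne hle.2 (fun h => hlt.ne (Prod.ext h1 h))
      refine ⟨qa, qb.snoc _ (by rw [hb]; exact h2), ha.trans h1, RelSeries.last_snoc _ _ _, ?_⟩
      simp only [RelSeries.snoc_length]
      omega
    · have h1' : (f (Fin.last L).castSucc).1 < (f (Fin.last (L + 1))).1 :=
        lt_of_le_of_ne hle.1 h1
      by_cases h2 : (f (Fin.last L).castSucc).2 = (f (Fin.last (L + 1))).2
      · refine ⟨qa.snoc _ (by rw [ha]; exact h1'), qb, RelSeries.last_snoc _ _ _,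
          hb.trans h2, ?_⟩
        simp only [RelSeries.snoc_length]
        omega
      · have h2' : (f (Fin.last L).castSucc).2 < (f (Fin.last (L + 1))).2 :=
          lt_of_le_of_ne hle.2 h2
        refine ⟨qa.snoc _ (by rw [ha]; exact h1'), qb.snoc _ (by rw [hb]; exact h2'),
          RelSeries.last_snoc _ _ _, RelSeries.last_snoc _ _ _, ?_⟩
        simp only [RelSeries.snoc_length]
        omega

lemma krullDim_prod_le {α β : Type u} [PartialOrder α] [PartialOrder β] :
    krullDim (α × β) ≤ krullDim α + krullDim β := by
  refine iSup_le fun p => ?_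
  obtain ⟨qa, qb, -, -, hlen⟩ := prodChainAux p.length p.toFun p.strictMono
  calc (p.length : WithBot ℕ∞) ≤ ((qa.length + qb.length : ℕ) : WithBot ℕ∞) := by
        exact_mod_cast hlen
    _ = (qa.length : WithBot ℕ∞) + (qb.length : WithBot ℕ∞) := by
        exact_mod_cast rfl
    _ ≤ krullDim α + krullDim β :=
        add_le_add (Order.LTSeries.length_le_krullDim qa) (Order.LTSeries.length_le_krullDim qb)

lemma krullDim_submodule_prod_le (R P Q : Type u) [Ring R] [AddCommGroup P] [Module R P]
    [AddCommGroup Q] [Module R Q] :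
    krullDim (Submodule R (P × Q)) ≤ krullDim (Submodule R P) + krullDim (Submodule R Q) := by
  refine le_trans (krullDim_le_of_strictMono
    (fun W : Submodule R (P × Q) =>
      (W.comap (LinearMap.inl R P Q), W.map (LinearMap.snd R P Q))) ?_) krullDim_prod_le
  intro W W' hWW'
  rw [lt_iff_le_and_ne]
  refine ⟨⟨Submodule.comap_mono hWW'.le, Submodule.map_mono hWW'.le⟩, fun heq => ?_⟩
  have h1 : W.comap (LinearMap.inl R P Q) = W'.comap (LinearMap.inl R P Q) :=
    congrArg Prod.fst heq
  have h2 : W.map (LinearMap.snd R P Q) = W'.map (LinearMap.snd R P Q) :=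
    congrArg Prod.snd heq
  refine hWW'.ne (le_antisymm hWW'.le fun x hx => ?_)
  have hx2 : x.2 ∈ W.map (LinearMap.snd R P Q) := by
    rw [h2]; exact ⟨x, hx, rfl⟩
  obtain ⟨w, hw, hw2⟩ := hx2
  have hw2' : w.2 = x.2 := hw2
  have hxw : x - w ∈ W' := sub_mem hx (hWW'.le hw)
  have hform : x - w = LinearMap.inl R P Q (x - w).1 := by
    have : (x - w).2 = 0 := by simp [hw2']
    exact Prod.ext rfl (by simpa using this)
  have hmem : (x - w).1 ∈ W'.comap (LinearMap.inl R P Q) := by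
    rw [Submodule.mem_comap, ← hform]; exact hxw
  rw [← h1, Submodule.mem_comap, ← hform] at hmem
  have := add_mem hmem hw
  simpa using this

/-- Splitting off the last coordinate of a finite product of copies of a module. -/
def piSplitEquiv (R X : Type u) [Ring R] [AddCommGroup X] [Module R X] (n : ℕ) :
    (Fin (n + 1) → X) ≃ₗ[R] (Fin n → X) × X where
  toFun v := (fun i => v i.succ, v 0)
  invFun p := Fin.cons p.2 p.1
  map_add' _ _ := rfl
  map_smul' _ _ := rfl
  left_inv v := by
    funext i
    refine Fin.cases ?_ (fun j => ?_) i <;> simp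
  right_inv p := by
    refine Prod.ext (funext fun i => ?_) ?_ <;> simp

lemma krullDim_submodule_pi_le (R X : Type u) [Ring R] [AddCommGroup X] [Module R X]
    (m : ℕ) (hm : krullDim (Submodule R X) ≤ (m : WithBot ℕ∞)) (n : ℕ) :
    krullDim (Submodule R (Fin n → X)) ≤ ((n * m : ℕ) : WithBot ℕ∞) := by
  induction n with
  | zero =>
    haveI : Unique (Submodule R (Fin 0 → X)) :=
      ⟨⟨⊥⟩, fun a => by
        ext x
        have hx : x = 0 := Subsingleton.elim x 0
        subst hx
        exact iff_of_true a.zero_mem (Submodule.zero_mem ⊥)⟩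
    rw [krullDim_eq_zero_of_unique]
    simp
  | succ nn ih =>
    calc krullDim (Submodule R (Fin (nn + 1) → X))
        = krullDim (Submodule R ((Fin nn → X) × X)) :=
          krullDim_eq_of_orderIso (Submodule.orderIsoMapComap (piSplitEquiv R X nn))
      _ ≤ krullDim (Submodule R (Fin nn → X)) + krullDim (Submodule R X) :=
          krullDim_submodule_prod_le R _ X
      _ ≤ ((nn * m : ℕ) : WithBot ℕ∞) + ((m : ℕ) : WithBot ℕ∞) := add_le_add ih hm
      _ = (((nn + 1) * m : ℕ) : WithBot ℕ∞) := by
          rw [← Nat.cast_add]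
          congr 1
          ring

end OrderAux

section MainAux

variable (A B X M : Type u) [Ring A] [Ring B]
  [AddCommGroup M] [Module A M] [Module Bᵐᵒᵖ M] [SMulCommClass A Bᵐᵒᵖ M]
  [AddCommGroup X] [Module Aᵐᵒᵖ X]

lemma balTmul_add_left (x y : X) (m : M) :
    BalTensor.tmul A X M (x + y) m = BalTensor.tmul A X M x m + BalTensor.tmul A X M y m := by
  simp [BalTensor.tmul, TensorProduct.add_tmul]

lemma balTmul_zero_left (m : M) : BalTensor.tmul A X M 0 m = 0 := by
  simp [BalTensor.tmul, TensorProduct.zero_tmul]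

lemma balTmul_sum_right {ι : Type*} (s : Finset ι) (x : X) (g : ι → M) :
    BalTensor.tmul A X M x (∑ i ∈ s, g i) = ∑ i ∈ s, BalTensor.tmul A X M x (g i) := by
  rw [BalTensor.tmul, TensorProduct.tmul_sum, map_sum]
  rfl

/-- The action of an endomorphism of `X` on `X ⊗_A M`, as a `Bᵐᵒᵖ`-linear endomorphism. -/
def eEnd (e : Module.End Aᵐᵒᵖ X) : Module.End Bᵐᵒᵖ (BalTensor A X M) where
  toFun t := e • t
  map_add' := smul_add e
  map_smul' c t := smul_comm e c t

/-- The map `X^n → X ⊗_A M` induced by `f : A^n → M`. -/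
def proj (n : ℕ) (f : (Fin n → A) →ₗ[A] M) (v : Fin n → X) : BalTensor A X M :=
  ∑ i, BalTensor.tmul A X M (v i) (f (Pi.single i 1))

lemma proj_add (n : ℕ) (f : (Fin n → A) →ₗ[A] M) (v w : Fin n → X) :
    proj A X M n f (v + w) = proj A X M n f v + proj A X M n f w := by
  simp [proj, balTmul_add_left, Finset.sum_add_distrib]

lemma proj_zero (n : ℕ) (f : (Fin n → A) →ₗ[A] M) : proj A X M n f 0 = 0 := by
  simp [proj, balTmul_zero_left]

lemma proj_smul (n : ℕ) (f : (Fin n → A) →ₗ[A] M) (e : Module.End Aᵐᵒᵖ X) (v : Fin n → X) :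
    proj A X M n f (e • v) = e • proj A X M n f v := by
  unfold proj
  rw [Finset.smul_sum]
  refine Finset.sum_congr rfl fun i _ => ?_
  rw [BalTensor.lsmul_tmul]
  rfl

lemma proj_surj (n : ℕ) (f : (Fin n → A) →ₗ[A] M) (hf : Function.Surjective f) :
    Function.Surjective (proj A X M n f) := by
  intro t
  obtain ⟨y, rfl⟩ := BalTensor.mk_surjective A X M t
  induction y using TensorProduct.induction_on with
  | zero => exact ⟨0, by rw [proj_zero, map_zero]⟩
  | tmul x m =>
    obtain ⟨a, rfl⟩ := hf m
    refine ⟨fun i => op (a i) • x, ?_⟩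
    have hstep : ∀ i : Fin n, BalTensor.tmul A X M (op (a i) • x) (f (Pi.single i 1))
        = BalTensor.tmul A X M x (f (Pi.single i (a i))) := by
      intro i
      rw [BalTensor.balance]
      congr 1
      rw [← map_smul]
      congr 1
      rw [← Pi.single_smul, smul_eq_mul, mul_one]
    rw [proj, Finset.sum_congr rfl (fun i _ => hstep i), ← balTmul_sum_right, ← map_sum,
      Finset.univ_sum_single]
    rfl
  | add y z hy hz =>
    obtain ⟨v, hv⟩ := hy
    obtain ⟨w, hw⟩ := hz
    exact ⟨v + w, by rw [proj_add, hv, hw, map_add]⟩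

end MainAux

/-- Let `M` be an `A`-`B`-bimodule which is a quotient of `A^{⊕n}` as a left
`A`-module. If `X` is a right `A`-module of finite endolength, then the right `B`-module
`X ⊗_A M` has finite endolength, at most `n` times the endolength of `X`. -/
theorem stmt9 (k A B M X : Type u) [Field k]
    [Ring A] [Algebra k A] [FiniteDimensional k A]
    [Ring B] [Algebra k B] [FiniteDimensional k B]
    [AddCommGroup M] [Module k M] [Module A M] [Module Bᵐᵒᵖ M]
    [SMulCommClass A Bᵐᵒᵖ M] [IsScalarTower k A M] [IsScalarTower k Bᵐᵒᵖ M]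
    [FiniteDimensional k M]
    [AddCommGroup X] [Module Aᵐᵒᵖ X]
    (n : ℕ) (f : (Fin n → A) →ₗ[A] M) (hf : Function.Surjective f)
    (hX : endolength Aᵐᵒᵖ X ≠ ⊤) :
    endolength Bᵐᵒᵖ (BalTensor A X M) ≠ ⊤ ∧
    endolength Bᵐᵒᵖ (BalTensor A X M) ≤ (n : WithBot ℕ∞) * endolength Aᵐᵒᵖ X := by
  classical
  -- the comparison map on submodule lattices
  let g : Submodule (Module.End Bᵐᵒᵖ (BalTensor A X M)) (BalTensor A X M) →
      Submodule (Module.End Aᵐᵒᵖ X) (Fin n → X) := fun p =>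
    { carrier := proj A X M n f ⁻¹' p
      add_mem' := fun {v w} hv hw => by
        simp only [Set.mem_preimage, SetLike.mem_coe] at *
        rw [proj_add]
        exact add_mem hv hw
      zero_mem' := by
        simp only [Set.mem_preimage, SetLike.mem_coe]
        rw [proj_zero]
        exact p.zero_mem
      smul_mem' := fun e v hv => by
        simp only [Set.mem_preimage, SetLike.mem_coe] at *
        rw [proj_smul]
        exact p.smul_mem (eEnd A B X M e) hv }
  have hg : StrictMono g := by
    intro p q hpq
    refine lt_of_le_of_ne (fun v hv => hpq.le hv) (fun heq => ?_)
    obtain ⟨t, htq, htp⟩ := SetLike.exists_of_lt hpq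
    obtain ⟨v, rfl⟩ := proj_surj A X M n f hf t
    have hvq : v ∈ g q := htq
    rw [← heq] at hvq
    exact htp hvq
  have key1 : endolength Bᵐᵒᵖ (BalTensor A X M) ≤
      Order.krullDim (Submodule (Module.End Aᵐᵒᵖ X) (Fin n → X)) := by
    unfold endolength moduleLength
    exact Order.krullDim_le_of_strictMono g hg
  obtain ⟨m, hm⟩ : ∃ m : ℕ, endolength Aᵐᵒᵖ X = (m : WithBot ℕ∞) := by
    have hbot : endolength Aᵐᵒᵖ X ≠ ⊥ := by
      intro h
      have h0 : (0 : WithBot ℕ∞) ≤ endolength Aᵐᵒᵖ X := by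
        unfold endolength moduleLength
        exact Order.krullDim_nonneg
      rw [h] at h0
      simp at h0
    obtain ⟨a, ha⟩ := WithBot.ne_bot_iff_exists.1 hbot
    have hatop : a ≠ ⊤ := by
      intro h
      apply hX
      rw [← ha, h]
      rfl
    obtain ⟨m, hm⟩ := WithTop.ne_top_iff_exists.1 hatop
    exact ⟨m, by rw [← ha, ← hm]; rfl⟩
  have hm' : Order.krullDim (Submodule (Module.End Aᵐᵒᵖ X) X) ≤ (m : WithBot ℕ∞) := by
    have := hm
    unfold endolength moduleLength at this
    exact this.le
  have key2 := krullDim_submodule_pi_le (Module.End Aᵐᵒᵖ X) X m hm' n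
  have key : endolength Bᵐᵒᵖ (BalTensor A X M) ≤ ((n * m : ℕ) : WithBot ℕ∞) :=
    le_trans key1 key2
  have hcast : ((n * m : ℕ) : WithBot ℕ∞) = (n : WithBot ℕ∞) * (m : WithBot ℕ∞) := by
    exact_mod_cast rfl
  have hnetop : ((n * m : ℕ) : WithBot ℕ∞) ≠ ⊤ := by
    have h1 : ((n * m : ℕ) : WithBot ℕ∞) = (((n * m : ℕ) : ℕ∞) : WithBot ℕ∞) := by
      exact_mod_cast rfl
    rw [h1, ← WithBot.coe_top]
    intro h
    exact (WithTop.natCast_ne_top _) (WithBot.coe_inj.1 h)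
  refine ⟨ne_top_of_le_ne_top hnetop key, ?_⟩
  rw [hm]
  exact le_trans key (le_of_eq hcast)

end

end JJ
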